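/- (Point identification under parallel trends.) Fix t ≥ 2 and suppose Δ_s(a) = Δ_s(b) for every s with 2 ≤ s ≤ t, and that the monotone trends condition min{Δ_s(a), Δ_s(b)} ≤ Δ_s(trt) ≤ max{Δ_s(a), Δ_s(b)} holds at every such s, and A_1 = 0. Then the lower and upper bracketing bounds coincide with the treatment effect: ∑_{s=2}^{t} min{τ_s(a), τ_s(b)} = ∑_{s=2}^{t} max{τ_s(a), τ_s(b)} = A_t. -/
import Mathlib

lemma telescope_Icc (A : ℕ → ℝ) (t : ℕ) (ht : 2 ≤ t) (hA1 : A 1 = 0) :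
    (∑ s ∈ Finset.Icc 2 t, (A s - A (s - 1))) = A t := by
  induction t with
  | zero => omega
  | succ n ih =>
    rcases Nat.lt_or_ge n 2 with h | h
    · interval_cases n
      · omega
      · simp [Finset.Icc_self, hA1]
    · rw [Finset.sum_Icc_succ_top (by omega : 2 ≤ n + 1), ih h]
      simp

/-- Point identification under parallel trends: if `Δ_s(a) = Δ_s(b)`
for all `2 ≤ s ≤ t`, the monotone trends condition holds at every such `s`, and
`A 1 = 0`, then the lower and upper bracketing bounds both equal `A_t`. -/
theorem point_identification_parallel_trends
    (μa μb μc A : ℕ → ℝ) (t : ℕ) (ht : 2 ≤ t) (hA1 : A 1 = 0)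
    (hpar : ∀ s ∈ Finset.Icc 2 t, μa s - μa (s - 1) = μb s - μb (s - 1))
    (hmt : ∀ s ∈ Finset.Icc 2 t,
      min (μa s - μa (s - 1)) (μb s - μb (s - 1)) ≤ μc s - μc (s - 1) ∧
      μc s - μc (s - 1) ≤ max (μa s - μa (s - 1)) (μb s - μb (s - 1))) :
    (∑ s ∈ Finset.Icc 2 t,
        min ((A s - A (s - 1)) + (μc s - μc (s - 1)) - (μa s - μa (s - 1)))
            ((A s - A (s - 1)) + (μc s - μc (s - 1)) - (μb s - μb (s - 1)))) = A t ∧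
    (∑ s ∈ Finset.Icc 2 t,
        max ((A s - A (s - 1)) + (μc s - μc (s - 1)) - (μa s - μa (s - 1)))
            ((A s - A (s - 1)) + (μc s - μc (s - 1)) - (μb s - μb (s - 1)))) = A t := by
  have key : ∀ s ∈ Finset.Icc 2 t, μc s - μc (s - 1) = μa s - μa (s - 1) := by
    intro s hs
    have h1 := hpar s hs
    have h2 := hmt s hs
    rw [← h1, min_self, max_self] at h2
    linarith [h2.1, h2.2]
  constructor
  all_goals
    rw [← telescope_Icc A t ht hA1]
    apply Finset.sum_congr rfl
    intro s hs
    rw [key s hs, ← hpar s hs]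
    simp
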